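/- Let k be a perfect field and G any affine abelian group scheme over k. Then 𝔾_m ⊗ G = 0, i.e. the tensor product of the multiplicative group with any affine group scheme is trivial. In particular, the tensor product on affine abelian group schemes over k admits no unit object. -/

import Mathlib

/-- An affine abelian group scheme over `k`, presented via its functor of points. -/
structure AffAbGrp (k : Type) [CommRing k] : Type 1 where
  C : Type
  [commRing : CommRing C]
  [algebra : Algebra k C]
  add : ∀ (R : Type) [CommRing R] [Algebra k R],
    (C →ₐ[k] R) → (C →ₐ[k] R) → (C →ₐ[k] R)
  zero : ∀ (R : Type) [CommRing R] [Algebra k R], (C →ₐ[k] R)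
  neg : ∀ (R : Type) [CommRing R] [Algebra k R], (C →ₐ[k] R) → (C →ₐ[k] R)
  add_assoc : ∀ (R : Type) [CommRing R] [Algebra k R] (f g h : C →ₐ[k] R),
    add R (add R f g) h = add R f (add R g h)
  add_comm : ∀ (R : Type) [CommRing R] [Algebra k R] (f g : C →ₐ[k] R),
    add R f g = add R g f
  zero_add : ∀ (R : Type) [CommRing R] [Algebra k R] (f : C →ₐ[k] R),
    add R (zero R) f = f
  neg_add : ∀ (R : Type) [CommRing R] [Algebra k R] (f : C →ₐ[k] R),
    add R (neg R f) f = zero R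
  map_add : ∀ (R S : Type) [CommRing R] [Algebra k R] [CommRing S] [Algebra k S]
    (ψ : R →ₐ[k] S) (f g : C →ₐ[k] R),
    ψ.comp (add R f g) = add S (ψ.comp f) (ψ.comp g)
  map_zero : ∀ (R S : Type) [CommRing R] [Algebra k R] [CommRing S] [Algebra k S]
    (ψ : R →ₐ[k] S), ψ.comp (zero R) = zero S

attribute [instance] AffAbGrp.commRing AffAbGrp.algebra

variable {k : Type} [CommRing k]

/-- A homomorphism of affine abelian group schemes: a natural additive transformation of
their functors of points. -/
structure AffAbHom (G H : AffAbGrp k) where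
  app : ∀ (R : Type) [CommRing R] [Algebra k R], (G.C →ₐ[k] R) → (H.C →ₐ[k] R)
  app_add : ∀ (R : Type) [CommRing R] [Algebra k R] (f g : G.C →ₐ[k] R),
    app R (G.add R f g) = H.add R (app R f) (app R g)
  app_nat : ∀ (R S : Type) [CommRing R] [Algebra k R] [CommRing S] [Algebra k S]
    (ψ : R →ₐ[k] S) (f : G.C →ₐ[k] R), ψ.comp (app R f) = app S (ψ.comp f)

/-- A bilinear natural transformation `G₁ × G₂ → H` of affine abelian group schemes. -/
structure AffBilin (G₁ G₂ H : AffAbGrp k) where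
  b : ∀ (R : Type) [CommRing R] [Algebra k R],
    (G₁.C →ₐ[k] R) → (G₂.C →ₐ[k] R) → (H.C →ₐ[k] R)
  left : ∀ (R : Type) [CommRing R] [Algebra k R] (x y : G₁.C →ₐ[k] R) (z : G₂.C →ₐ[k] R),
    b R (G₁.add R x y) z = H.add R (b R x z) (b R y z)
  right : ∀ (R : Type) [CommRing R] [Algebra k R] (x : G₁.C →ₐ[k] R) (y z : G₂.C →ₐ[k] R),
    b R x (G₂.add R y z) = H.add R (b R x y) (b R x z)
  nat : ∀ (R S : Type) [CommRing R] [Algebra k R] [CommRing S] [Algebra k S]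
    (ψ : R →ₐ[k] S) (x : G₁.C →ₐ[k] R) (y : G₂.C →ₐ[k] R),
    ψ.comp (b R x y) = b S (ψ.comp x) (ψ.comp y)

/-- `(T, a)` is a tensor product of `G₁` and `G₂`: every bilinear natural transformation
out of `G₁ × G₂` factors uniquely through `a`. -/
def IsTensorProd (G₁ G₂ T : AffAbGrp k) (a : AffBilin G₁ G₂ T) : Prop :=
  ∀ (H : AffAbGrp k) (φ : AffBilin G₁ G₂ H),
    ∃! f : AffAbHom T H, ∀ (R : Type) [CommRing R] [Algebra k R]
      (x : G₁.C →ₐ[k] R) (y : G₂.C →ₐ[k] R), f.app R (a.b R x y) = φ.b R x y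

/-- Two affine abelian group schemes are isomorphic if there are mutually inverse
homomorphisms between them. -/
def AffIso (G H : AffAbGrp k) : Prop :=
  ∃ (f : AffAbHom G H) (g : AffAbHom H G),
    (∀ (R : Type) [CommRing R] [Algebra k R] (x : G.C →ₐ[k] R), g.app R (f.app R x) = x) ∧
    (∀ (R : Type) [CommRing R] [Algebra k R] (y : H.C →ₐ[k] R), f.app R (g.app R y) = y)

/-- `U` is a unit object for the tensor product of affine abelian group schemes. -/
def IsUnitObj (U : AffAbGrp k) : Prop :=
  ∀ G : AffAbGrp k, ∃ (T : AffAbGrp k) (a : AffBilin G U T),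
    IsTensorProd G U T a ∧ AffIso T G

/-! ### Auxiliary material for the proof -/

open LaurentPolynomial

namespace GmTensorAux

variable {k : Type} [CommRing k]

/-- Iterated addition of a point of an affine abelian group scheme. -/
def nsm (K : AffAbGrp k) (R : Type) [CommRing R] [Algebra k R] :
    ℕ → (K.C →ₐ[k] R) → (K.C →ₐ[k] R)
  | 0, _ => K.zero R
  | m + 1, f => K.add R f (nsm K R m f)

lemma nsm_zero (K : AffAbGrp k) (R : Type) [CommRing R] [Algebra k R] (f : K.C →ₐ[k] R) :
    nsm K R 0 f = K.zero R := rfl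

lemma nsm_succ (K : AffAbGrp k) (R : Type) [CommRing R] [Algebra k R] (m : ℕ)
    (f : K.C →ₐ[k] R) : nsm K R (m + 1) f = K.add R f (nsm K R m f) := rfl

lemma eq_zero_of_add_self (K : AffAbGrp k) (R : Type) [CommRing R] [Algebra k R]
    (f : K.C →ₐ[k] R) (h : K.add R f f = f) : f = K.zero R := by
  calc f = K.add R (K.zero R) f := (K.zero_add R f).symm
    _ = K.add R (K.add R (K.neg R f) f) f := by rw [K.neg_add]
    _ = K.add R (K.neg R f) (K.add R f f) := K.add_assoc R _ _ _
    _ = K.add R (K.neg R f) f := by rw [h]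
    _ = K.zero R := K.neg_add R f

lemma comp_nsm (K : AffAbGrp k) {R S : Type} [CommRing R] [Algebra k R] [CommRing S]
    [Algebra k S] (ψ : R →ₐ[k] S) (m : ℕ) (f : K.C →ₐ[k] R) :
    ψ.comp (nsm K R m f) = nsm K S m (ψ.comp f) := by
  induction m with
  | zero => exact K.map_zero R S ψ
  | succ m ih => rw [nsm_succ, nsm_succ, K.map_add, ih]

/-- Evaluation of a Laurent polynomial algebra at an algebra point `y` and a unit `x`. -/
noncomputable def ev {A R : Type} [CommRing A] [Algebra k A] [CommRing R] [Algebra k R]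
    (y : A →ₐ[k] R) (x : Rˣ) : LaurentPolynomial A →ₐ[k] R :=
  AddMonoidAlgebra.liftNCAlgHom y ((Units.coeHom R).comp (zpowersHom Rˣ x))
    fun _ _ => Commute.all _ _

lemma ev_single {A R : Type} [CommRing A] [Algebra k A] [CommRing R] [Algebra k R]
    (y : A →ₐ[k] R) (x : Rˣ) (n : ℤ) (a : A) :
    ev y x (AddMonoidAlgebra.single n a) = y a * ((x ^ n : Rˣ) : R) := by
  show AddMonoidAlgebra.liftNC ((y : A →+* R) : A →+ R)
    (⇑((Units.coeHom R).comp (zpowersHom Rˣ x))) (AddMonoidAlgebra.single n a) = _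
  rw [AddMonoidAlgebra.liftNC_single]
  simp

lemma ev_C {A R : Type} [CommRing A] [Algebra k A] [CommRing R] [Algebra k R]
    (y : A →ₐ[k] R) (x : Rˣ) (a : A) :
    ev y x (C a) = y a := by
  rw [← single_eq_C, ev_single]; simp

lemma ev_T1 {A R : Type} [CommRing A] [Algebra k A] [CommRing R] [Algebra k R]
    (y : A →ₐ[k] R) (x : Rˣ) :
    ev y x (T 1) = (x : R) := by
  rw [show (T 1 : LaurentPolynomial A) = AddMonoidAlgebra.single (1 : ℤ) (1 : A) from rfl, ev_single]
  simp

/-- The constants inclusion as an algebra hom. -/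
noncomputable def CA (A : Type) [CommRing A] [Algebra k A] : A →ₐ[k] LaurentPolynomial A :=
  AddMonoidAlgebra.singleZeroAlgHom

lemma CA_apply (A : Type) [CommRing A] [Algebra k A] (a : A) :
    (CA A : A →ₐ[k] LaurentPolynomial A) a = C a := rfl

/-- Algebra homs out of a Laurent polynomial ring agree if they agree on constants and `T 1`. -/
lemma laurent_algHom_ext {A R : Type} [CommRing A] [Algebra k A] [CommRing R] [Algebra k R]
    {φ ψ : LaurentPolynomial A →ₐ[k] R}
    (hC : ∀ a : A, φ (C a) = ψ (C a)) (hT : φ (T 1) = ψ (T 1)) : φ = ψ := by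
  have h1 : φ (T 1) * φ (T (-1)) = 1 := by
    rw [← map_mul, ← T_add]; norm_num
  have h2 : ψ (T 1) * ψ (T (-1)) = 1 := by
    rw [← map_mul, ← T_add]; norm_num
  have hTinv : φ (T (-1)) = ψ (T (-1)) := by
    calc φ (T (-1)) = φ (T (-1)) * (ψ (T 1) * ψ (T (-1))) := by rw [h2, mul_one]
      _ = (φ (T 1) * φ (T (-1))) * ψ (T (-1)) := by rw [← hT]; ring
      _ = ψ (T (-1)) := by rw [h1, one_mul]
  have hTn : ∀ n : ℤ, φ (T n) = ψ (T n) := by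
    intro n
    obtain ⟨m, rfl | rfl⟩ := n.eq_nat_or_neg
    · have h : (T (m : ℤ) : LaurentPolynomial A) = T 1 ^ m := by rw [T_pow, mul_one]
      rw [h, map_pow, map_pow, hT]
    · have h : (T (-(m : ℤ)) : LaurentPolynomial A) = T (-1) ^ m := by
        rw [T_pow]; congr 1; ring
      rw [h, map_pow, map_pow, hTinv]
  apply AlgHom.ext; intro p
  induction p using LaurentPolynomial.induction_on' with
  | add p q hp hq => rw [map_add, map_add, hp, hq]
  | C_mul_T n a => rw [map_mul, map_mul, hC, hTn]

/-- The distinguished unit `T 1` of the Laurent polynomial ring. -/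
noncomputable def tU (A : Type) [CommRing A] : (LaurentPolynomial A)ˣ :=
  (isUnit_T (R := A) 1).unit

lemma tU_val (A : Type) [CommRing A] : ((tU A : (LaurentPolynomial A)ˣ) : LaurentPolynomial A) = T 1 :=
  IsUnit.unit_spec _

lemma tU_inv_val (A : Type) [CommRing A] :
    (((tU A)⁻¹ : (LaurentPolynomial A)ˣ) : LaurentPolynomial A) = T (-1) := by
  have h : (((tU A)⁻¹ : (LaurentPolynomial A)ˣ) : LaurentPolynomial A) * T 1 = 1 := by
    rw [← tU_val]
    exact Units.inv_mul _
  calc (((tU A)⁻¹ : (LaurentPolynomial A)ˣ) : LaurentPolynomial A)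
      = (((tU A)⁻¹ : (LaurentPolynomial A)ˣ) : LaurentPolynomial A) * (T 1 * T (-1)) := by
        rw [← T_add]; norm_num
    _ = ((((tU A)⁻¹ : (LaurentPolynomial A)ˣ) : LaurentPolynomial A) * T 1) * T (-1) := by ring
    _ = T (-1) := by rw [h, one_mul]

lemma tU_zpow_val (A : Type) [CommRing A] (z : ℤ) :
    ((tU A ^ z : (LaurentPolynomial A)ˣ) : LaurentPolynomial A) = T z := by
  induction z using Int.induction_on with
  | zero => simp
  | succ i ih =>
      rw [zpow_add_one, Units.val_mul, ih, tU_val, ← T_add]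
  | pred i ih =>
      rw [zpow_sub_one, Units.val_mul, ih, tU_inv_val, ← T_add, show -(i:ℤ) + -1 = -(i:ℤ) - 1 by omega]

end GmTensorAux

namespace GmTensorAux

variable {k : Type} [CommRing k]

theorem vanish (G H : AffAbGrp k)
    (b : ∀ (R : Type) [CommRing R] [Algebra k R], Rˣ → (G.C →ₐ[k] R) → (H.C →ₐ[k] R))
    (hl : ∀ (R : Type) [CommRing R] [Algebra k R] (x y : Rˣ) (z : G.C →ₐ[k] R),
        b R (x * y) z = H.add R (b R x z) (b R y z))
    (hr : ∀ (R : Type) [CommRing R] [Algebra k R] (x : Rˣ) (y z : G.C →ₐ[k] R),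
        b R x (G.add R y z) = H.add R (b R x y) (b R x z))
    (hn : ∀ (R S : Type) [CommRing R] [Algebra k R] [CommRing S] [Algebra k S]
        (ψ : R →ₐ[k] S) (x : Rˣ) (y : G.C →ₐ[k] R),
        ψ.comp (b R x y) = b S (Units.map ψ.toRingHom.toMonoidHom x) (ψ.comp y)) :
    ∀ (R : Type) [CommRing R] [Algebra k R] (x : Rˣ) (y : G.C →ₐ[k] R),
      b R x y = H.zero R := by
  -- basic vanishing at 1 and at the zero point
  have b1 : ∀ (R : Type) [CommRing R] [Algebra k R] (y : G.C →ₐ[k] R),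
      b R 1 y = H.zero R := by
    intro R _ _ y
    apply eq_zero_of_add_self
    rw [← hl, one_mul]
  have b0 : ∀ (R : Type) [CommRing R] [Algebra k R] (x : Rˣ),
      b R x (G.zero R) = H.zero R := by
    intro R _ _ x
    apply eq_zero_of_add_self
    rw [← hr, G.zero_add]
  -- iterated addition
  have L1 : ∀ (R : Type) [CommRing R] [Algebra k R] (x : Rˣ) (y : G.C →ₐ[k] R) (m : ℕ),
      b R (x ^ m) y = nsm H R m (b R x y) := by
    intro R _ _ x y m
    induction m with
    | zero => rw [pow_zero, nsm_zero]; exact b1 R y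
    | succ m ih => rw [pow_succ, hl, ih, nsm_succ, H.add_comm]
  have L2 : ∀ (R : Type) [CommRing R] [Algebra k R] (x : Rˣ) (y : G.C →ₐ[k] R) (m : ℕ),
      b R x (nsm G R m y) = nsm H R m (b R x y) := by
    intro R _ _ x y m
    induction m with
    | zero => rw [nsm_zero, nsm_zero]; exact b0 R x
    | succ m ih => rw [nsm_succ, hr, ih, nsm_succ]
  intro R _ _ x y
  -- the universal point
  set γ : H.C →ₐ[k] LaurentPolynomial G.C := b (LaurentPolynomial G.C) (tU G.C) (CA G.C) with hγ
  have EV : ∀ (R' : Type) [CommRing R'] [Algebra k R'] (y' : G.C →ₐ[k] R') (x' : R'ˣ),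
      (ev y' x').comp γ = b R' x' y' := by
    intro R' _ _ y' x'
    rw [hγ, hn _ _ (ev y' x') (tU G.C) (CA G.C)]
    have hu : Units.map (ev y' x' : LaurentPolynomial G.C →ₐ[k] R').toRingHom.toMonoidHom
        (tU G.C) = x' := by
      apply Units.ext
      rw [Units.coe_map]
      show ev y' x' ((tU G.C : (LaurentPolynomial G.C)ˣ) : LaurentPolynomial G.C) = _
      rw [tU_val, ev_T1]
    have hc : (ev y' x').comp (CA G.C) = y' := by
      apply AlgHom.ext; intro a
      show ev y' x' (CA (k := k) G.C a) = y' a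
      rw [CA_apply, ev_C]
    rw [hu, hc]
  -- the key identity comparing reparametrization and multiplication of the point
  have KEY : ∀ m : ℕ,
      (ev (CA G.C) (tU G.C ^ m)).comp γ
        = (ev ((CA G.C).comp (nsm G G.C m (AlgHom.id k G.C))) (tU G.C)).comp γ := by
    intro m
    rw [EV _ (CA G.C) (tU G.C ^ m), EV _ _ (tU G.C), L1,
      comp_nsm G (CA G.C) m (AlgHom.id k G.C), AlgHom.comp_id, L2]
  -- coefficient vanishing
  have coeffzero : ∀ (c : H.C) (n₀ : ℤ), n₀ ≠ 0 → (γ c).coeff n₀ = 0 := by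
    intro c n₀ hn₀
    by_cases hmem : n₀ ∈ (γ c).coeff.support
    swap
    · exact Finsupp.notMem_support_iff.mp hmem
    set p : LaurentPolynomial G.C := γ c with hp
    set B : ℕ := p.coeff.support.sup Int.natAbs with hB
    set m : ℕ := B + 1 with hm
    have hmne : (m : ℤ) ≠ 0 := by positivity
    have hj : ((m : ℤ) * n₀) ∉ p.coeff.support := by
      intro hmem'
      have h1 : ((m : ℤ) * n₀).natAbs ≤ B := Finset.le_sup hmem'
      rw [Int.natAbs_mul, Int.natAbs_natCast] at h1
      have h3 : m ≤ m * n₀.natAbs := Nat.le_mul_of_pos_right m (Int.natAbs_pos.mpr hn₀)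
      omega
    -- expansion of evaluations
    have expand : ∀ (R' : Type) [CommRing R'] [Algebra k R'] (y' : G.C →ₐ[k] R') (x' : R'ˣ),
        ev y' x' p = p.coeff.sum (fun n a => y' a * ((x' ^ n : R'ˣ) : R')) := by
      intro R' _ _ y' x'
      conv_lhs => rw [← AddMonoidAlgebra.sum_coeff_single p]
      rw [map_finsuppSum]
      exact Finsupp.sum_congr fun n _ => ev_single y' x' n _
    have hKc : ev (k := k) (CA G.C) (tU G.C ^ m) p = ev (k := k) ((CA G.C).comp (nsm G G.C m (AlgHom.id k G.C))) (tU G.C) p := by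
      have := congrArg (fun φ : H.C →ₐ[k] LaurentPolynomial G.C => φ c) (KEY m)
      simpa using this
    -- rewrite both sides as finsupps
    have hL : ev (k := k) (CA G.C) (tU G.C ^ m) p = p.coeff.sum (fun n a => AddMonoidAlgebra.single ((m : ℤ) * n) a) := by
      rw [expand]
      apply Finsupp.sum_congr
      intro n _
      have h4 : ((tU G.C ^ m) ^ n : (LaurentPolynomial G.C)ˣ) = tU G.C ^ ((m : ℤ) * n) := by
        rw [← zpow_natCast (tU G.C) m, ← zpow_mul]
      rw [h4, tU_zpow_val, CA_apply, ← single_eq_C_mul_T]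
    have hR : ev (k := k) ((CA G.C).comp (nsm G G.C m (AlgHom.id k G.C))) (tU G.C) p
        = p.coeff.sum (fun n a => AddMonoidAlgebra.single n ((nsm G G.C m (AlgHom.id k G.C)) a)) := by
      rw [expand]
      apply Finsupp.sum_congr
      intro n _
      show CA (k := k) G.C ((nsm G G.C m (AlgHom.id k G.C)) _) * _ = _
      rw [tU_zpow_val, CA_apply, ← single_eq_C_mul_T]
    rw [hL, hR] at hKc
    have hcoeff : (p.coeff.sum fun n a => AddMonoidAlgebra.single ((m : ℤ) * n) a).coeff ((m : ℤ) * n₀)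
        = (p.coeff.sum fun n a => AddMonoidAlgebra.single n ((nsm G G.C m (AlgHom.id k G.C)) a)).coeff ((m : ℤ) * n₀) :=
      congrArg (fun q : LaurentPolynomial G.C => q.coeff ((m : ℤ) * n₀)) hKc
    -- left side evaluates to `p n₀`
    have hLc : (p.coeff.sum fun n a => AddMonoidAlgebra.single ((m : ℤ) * n) a).coeff ((m : ℤ) * n₀) = p.coeff n₀ := by
      simp only [AddMonoidAlgebra.coeff_finsuppSum, AddMonoidAlgebra.coeff_single, Finsupp.sum_apply]
      rw [Finsupp.sum]
      rw [Finset.sum_eq_single_of_mem n₀ hmem]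
      · rw [Finsupp.single_eq_same]
      · intro n _ hne
        apply Finsupp.single_eq_of_ne
        intro hEq
        exact hne (mul_left_cancel₀ hmne hEq).symm
    have hRc : (p.coeff.sum fun n a => AddMonoidAlgebra.single n ((nsm G G.C m (AlgHom.id k G.C)) a)).coeff ((m : ℤ) * n₀) = 0 := by
      simp only [AddMonoidAlgebra.coeff_finsuppSum, AddMonoidAlgebra.coeff_single, Finsupp.sum_apply]
      rw [Finsupp.sum]
      apply Finset.sum_eq_zero
      intro n hn'
      apply Finsupp.single_eq_of_ne
      intro hEq
      exact hj (hEq ▸ hn')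
    rw [hLc, hRc] at hcoeff
    exact hcoeff
  -- conclude
  have hconst : ∀ c : H.C, ev y x (γ c) = ev y (1 : Rˣ) (γ c) := by
    intro c
    have hsingle : γ c = AddMonoidAlgebra.single 0 ((γ c).coeff 0) := by
      apply AddMonoidAlgebra.coeff_injective
      rw [AddMonoidAlgebra.coeff_single]
      apply Finsupp.ext; intro n
      by_cases hn' : n = 0
      · subst hn'; rw [Finsupp.single_eq_same]
      · rw [coeffzero c n hn', Finsupp.single_eq_of_ne hn']
    rw [hsingle, ev_single, ev_single]
    simp
  have hcomp : (ev y x).comp γ = (ev y (1 : Rˣ)).comp γ := by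
    apply AlgHom.ext; intro c
    show ev y x (γ c) = ev y (1 : Rˣ) (γ c)
    exact hconst c
  rw [EV R y x, EV R y (1 : Rˣ)] at hcomp
  rw [hcomp, b1]

end GmTensorAux

namespace GmTensorAux

variable {k : Type} [CommRing k]

/-- The unit of `R` attached to a point of `𝔾ₘ`. -/
noncomputable def toU {R : Type} [CommRing R] [Algebra k R]
    (f : LaurentPolynomial k →ₐ[k] R) : Rˣ where
  val := f (T 1)
  inv := f (T (-1))
  val_inv := by rw [← map_mul, ← T_add]; norm_num
  inv_val := by rw [← map_mul, ← T_add]; norm_num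

/-- The point of `𝔾ₘ` attached to a unit of `R`. -/
noncomputable def ofU {R : Type} [CommRing R] [Algebra k R] (x : Rˣ) :
    LaurentPolynomial k →ₐ[k] R :=
  ev (Algebra.ofId k R) x

lemma ofU_T1 {R : Type} [CommRing R] [Algebra k R] (x : Rˣ) :
    ofU (k := k) x (T 1) = (x : R) := ev_T1 _ _

lemma toU_ofU {R : Type} [CommRing R] [Algebra k R] (x : Rˣ) : toU (ofU (k := k) x) = x := by
  apply Units.ext
  show ofU (k := k) x (T 1) = (x : R)
  exact ofU_T1 x

lemma ofU_toU {R : Type} [CommRing R] [Algebra k R] (f : LaurentPolynomial k →ₐ[k] R) :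
    ofU (toU f) = f := by
  apply laurent_algHom_ext
  · intro a
    rw [show ofU (toU f) (C a) = Algebra.ofId k R a from ev_C _ _ a]
    rw [C_eq_algebraMap, f.commutes]
    rfl
  · rw [ofU_T1]; rfl

lemma comp_ofU {R S : Type} [CommRing R] [Algebra k R] [CommRing S] [Algebra k S]
    (ψ : R →ₐ[k] S) (x : Rˣ) :
    ψ.comp (ofU x) = ofU (Units.map ψ.toRingHom.toMonoidHom x) := by
  apply laurent_algHom_ext
  · intro a
    have e1 : ofU (k := k) x (C a) = Algebra.ofId k R a := ev_C _ _ a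
    have e2 : ofU (k := k) (Units.map ψ.toRingHom.toMonoidHom x) (C a) = Algebra.ofId k S a :=
      ev_C _ _ a
    show ψ (ofU (k := k) x (C a)) = ofU (k := k) (Units.map ψ.toRingHom.toMonoidHom x) (C a)
    rw [e1, e2]
    show ψ (algebraMap k R a) = algebraMap k S a
    rw [ψ.commutes]
  · show ψ (ofU (k := k) x (T 1)) = ofU (k := k) (Units.map ψ.toRingHom.toMonoidHom x) (T 1)
    rw [ofU_T1, ofU_T1]
    rfl

lemma toU_comp {R S : Type} [CommRing R] [Algebra k R] [CommRing S] [Algebra k S]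
    (ψ : R →ₐ[k] S) (f : LaurentPolynomial k →ₐ[k] R) :
    toU (ψ.comp f) = Units.map ψ.toRingHom.toMonoidHom (toU f) :=
  Units.ext rfl

/-- The multiplicative group `𝔾ₘ` as an affine abelian group scheme. -/
noncomputable def Gm : AffAbGrp k where
  C := LaurentPolynomial k
  commRing := inferInstance
  algebra := inferInstance
  add := fun R _ _ f g => ofU (toU f * toU g)
  zero := fun R _ _ => ofU 1
  neg := fun R _ _ f => ofU (toU f)⁻¹
  add_assoc := by
    intro R _ _ f g h
    rw [toU_ofU, toU_ofU, mul_assoc]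
  add_comm := by
    intro R _ _ f g
    rw [mul_comm]
  zero_add := by
    intro R _ _ f
    rw [toU_ofU, one_mul, ofU_toU]
  neg_add := by
    intro R _ _ f
    rw [toU_ofU, inv_mul_cancel]
  map_add := by
    intro R S _ _ _ _ ψ f g
    rw [comp_ofU, toU_comp, toU_comp, map_mul]
  map_zero := by
    intro R S _ _ _ _ ψ
    rw [comp_ofU, map_one]

lemma Gm_add_ofU {R : Type} [CommRing R] [Algebra k R] (x y : Rˣ) :
    (Gm (k := k)).add R (ofU x) (ofU y) = ofU (x * y) := by
  show ofU (toU (ofU x) * toU (ofU y)) = ofU (x * y)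
  rw [toU_ofU, toU_ofU]

/-- There is no unit object. -/
theorem no_unit [Nontrivial k] : ¬ ∃ U : AffAbGrp k, IsUnitObj U := by
  rintro ⟨U, hU⟩
  obtain ⟨T', a, hTP, f, g, hgf, hfg⟩ := hU (Gm (k := k))
  -- every value of the universal bilinear map vanishes
  have hvan : ∀ (R : Type) [CommRing R] [Algebra k R] (x : Rˣ) (y : U.C →ₐ[k] R),
      a.b R (ofU x) y = T'.zero R := by
    refine vanish U T' (fun R _ _ x y => a.b R (ofU x) y) ?_ ?_ ?_
    · intro R _ _ x y z
      rw [← Gm_add_ofU]; exact a.left R (ofU x) (ofU y) z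
    · intro R _ _ x y z
      exact a.right R (ofU x) y z
    · intro R S _ _ _ _ ψ x y
      rw [← comp_ofU]; exact a.nat R S ψ (ofU x) y
  have hvan' : ∀ (R : Type) [CommRing R] [Algebra k R] (f' : (Gm (k := k)).C →ₐ[k] R)
      (y : U.C →ₐ[k] R), a.b R f' y = T'.zero R := by
    intro R _ _ f' y
    rw [← ofU_toU f']
    exact hvan R (toU f') y
  -- the identity and zero endomorphisms of T' both factor the universal map
  let idT : AffAbHom T' T' :=
    ⟨fun R _ _ h => h, fun R _ _ f g => rfl, fun R S _ _ _ _ ψ h => rfl⟩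
  let zT : AffAbHom T' T' :=
    ⟨fun R _ _ _ => T'.zero R, fun R _ _ f g => (T'.zero_add R (T'.zero R)).symm,
      fun R S _ _ _ _ ψ h => T'.map_zero R S ψ⟩
  obtain ⟨f₀, hf₀, huniq⟩ := hTP T' a
  have h1 : idT = f₀ := huniq idT (fun R _ _ x y => rfl)
  have h2 : zT = f₀ := huniq zT (fun R _ _ x y => (hvan' R x y).symm)
  have hTtriv : ∀ (R : Type) [CommRing R] [Algebra k R] (h : T'.C →ₐ[k] R), h = T'.zero R := by
    intro R _ _ h
    exact congrArg (fun F : AffAbHom T' T' => F.app R h) (h1.trans h2.symm)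
  -- all points of 𝔾ₘ coincide
  have hGm : ∀ (y₁ y₂ : (Gm (k := k)).C →ₐ[k] LaurentPolynomial k), y₁ = y₂ := by
    intro y₁ y₂
    have e1 := hfg (LaurentPolynomial k) y₁
    have e2 := hfg (LaurentPolynomial k) y₂
    rw [hTtriv _ (g.app _ y₁)] at e1
    rw [hTtriv _ (g.app _ y₂)] at e2
    rw [← e1, ← e2]
  have hx : ofU (R := LaurentPolynomial k) (1 : (LaurentPolynomial k)ˣ) = ofU (tU k) :=
    hGm _ _
  have h11 : (1 : (LaurentPolynomial k)ˣ) = tU k := by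
    rw [← toU_ofU (k := k) (R := LaurentPolynomial k) 1, hx, toU_ofU]
  have hT1 : (1 : LaurentPolynomial k) = T 1 := by
    rw [show (1 : LaurentPolynomial k) = ((1 : (LaurentPolynomial k)ˣ) : LaurentPolynomial k)
      from rfl, h11, tU_val]
  have h0 : (1 : LaurentPolynomial k).coeff 0 = (T 1 : LaurentPolynomial k).coeff 0 :=
    congrArg (fun q : LaurentPolynomial k => q.coeff (0 : ℤ)) hT1
  rw [AddMonoidAlgebra.one_def, AddMonoidAlgebra.coeff_single, Finsupp.single_eq_same, T_apply] at h0
  exact one_ne_zero h0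

end GmTensorAux


/-- Let `k` be a perfect field. Then `𝔾_m ⊗ G = 0` for every affine
abelian group scheme `G` over `k`: every bilinear natural transformation
`𝔾_m × G → H` (where `𝔾_m(R) = Rˣ`) is trivial. In particular, the tensor product of
affine abelian group schemes over `k` admits no unit object. -/
theorem gm_tensor_eq_zero_and_no_unit (k : Type) [Field k] [PerfectField k]
    (G : AffAbGrp k) :
    (∀ (H : AffAbGrp k)
      (b : ∀ (R : Type) [CommRing R] [Algebra k R],
        Rˣ → (G.C →ₐ[k] R) → (H.C →ₐ[k] R))
      (_ : ∀ (R : Type) [CommRing R] [Algebra k R] (x y : Rˣ) (z : G.C →ₐ[k] R),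
        b R (x * y) z = H.add R (b R x z) (b R y z))
      (_ : ∀ (R : Type) [CommRing R] [Algebra k R] (x : Rˣ) (y z : G.C →ₐ[k] R),
        b R x (G.add R y z) = H.add R (b R x y) (b R x z))
      (_ : ∀ (R S : Type) [CommRing R] [Algebra k R] [CommRing S] [Algebra k S]
        (ψ : R →ₐ[k] S) (x : Rˣ) (y : G.C →ₐ[k] R),
        ψ.comp (b R x y) = b S (Units.map ψ.toRingHom.toMonoidHom x) (ψ.comp y)),
      ∀ (R : Type) [CommRing R] [Algebra k R] (x : Rˣ) (y : G.C →ₐ[k] R),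
        b R x y = H.zero R) ∧
    ¬ ∃ U : AffAbGrp k, IsUnitObj U := by
  constructor
  · intro H b hl hr hn
    exact GmTensorAux.vanish G H b hl hr hn
  · exact GmTensorAux.no_unit
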